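/- Let t be a positive integer and 0 ≤ k ≤ t. If v and v' are both k-vertices of G_t, then the number of vertices of G_t orthogonal to v equals the number of vertices of G_t orthogonal to v'; that is, all k-vertices of G_t have the same degree. -/

import Mathlib

open Finset

/-- A ±1-vector of length `4t`. -/
def IsPMVector (t : ℕ) (v : Fin (4 * t) → ℤ) : Prop :=
  ∀ i, v i = 1 ∨ v i = -1

/-- Orthogonality of vectors of length `4t`. -/
def Orth (t : ℕ) (v w : Fin (4 * t) → ℤ) : Prop :=
  ∑ i, v i * w i = 0

/-- First normalized row: all ones. -/
def r1 (t : ℕ) : Fin (4 * t) → ℤ := fun _ => 1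

/-- Second normalized row: `1` on Q1 ∪ Q2, `-1` on Q3 ∪ Q4. -/
def r2 (t : ℕ) : Fin (4 * t) → ℤ := fun i => if (i : ℕ) < 2 * t then 1 else -1

/-- Third normalized row: `1` on Q1 ∪ Q3, `-1` on Q2 ∪ Q4. -/
def r3 (t : ℕ) : Fin (4 * t) → ℤ :=
  fun i => if (i : ℕ) < t ∨ (2 * t ≤ (i : ℕ) ∧ (i : ℕ) < 3 * t) then 1 else -1

/-- A vertex of the Hadamard graph `G_t`: a ±1-vector of length `4t`
orthogonal to each of the three normalized rows. -/
def IsVertex (t : ℕ) (v : Fin (4 * t) → ℤ) : Prop :=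
  IsPMVector t v ∧ Orth t v (r1 t) ∧ Orth t v (r2 t) ∧ Orth t v (r3 t)

/-- Number of entries of `v` equal to `-1` in quarter `Qⱼ₊₁ = [j*t, (j+1)*t)`, `j = 0,1,2,3`. -/
def negCount (t : ℕ) (v : Fin (4 * t) → ℤ) (j : ℕ) : ℕ :=
  (univ.filter fun i : Fin (4 * t) =>
    j * t ≤ (i : ℕ) ∧ (i : ℕ) < (j + 1) * t ∧ v i = -1).card

/-- A `k`-vertex of `G_t`: a vertex with exactly `k` entries equal to `-1` in the
first quarter. -/
def IsKVertex (t k : ℕ) (v : Fin (4 * t) → ℤ) : Prop :=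
  IsVertex t v ∧ negCount t v 0 = k

-- helpers
def nc (t : ℕ) (v : Fin (4 * t) → ℤ) (q : ℕ) : ℕ :=
  (univ.filter fun i : Fin (4 * t) => (i : ℕ) / t = q ∧ v i = -1).card

lemma div_eq_iff' {t : ℕ} (ht : 0 < t) (q n : ℕ) :
    n / t = q ↔ q * t ≤ n ∧ n < (q + 1) * t := by
  constructor
  · rintro rfl
    exact ⟨Nat.div_mul_le_self n t, (Nat.div_lt_iff_lt_mul ht).mp (Nat.lt_succ_self _)⟩
  · rintro ⟨h1, h2⟩
    have a := (Nat.le_div_iff_mul_le ht).mpr h1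
    have b := (Nat.div_lt_iff_lt_mul ht).mpr h2
    omega

lemma nc_eq_negCount {t : ℕ} (ht : 0 < t) (v : Fin (4 * t) → ℤ) (q : ℕ) :
    nc t v q = negCount t v q := by
  unfold nc negCount
  congr 1
  apply Finset.filter_congr
  intro i _
  rw [div_eq_iff' ht]
  tauto

lemma pm_sum {t : ℕ} {v : Fin (4 * t) → ℤ} (hv : IsPMVector t v) (S : Finset (Fin (4 * t))) :
    ∑ i ∈ S, v i = (S.card : ℤ) - 2 * ((S.filter fun i => v i = -1).card : ℤ) := by
  classical
  rw [← Finset.sum_filter_add_sum_filter_not S (fun i => v i = -1)]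
  have h1 : ∑ i ∈ S.filter (fun i => v i = -1), v i
      = -((S.filter fun i => v i = -1).card : ℤ) := by
    rw [Finset.sum_congr rfl (fun i hi => (Finset.mem_filter.mp hi).2)]
    simp
  have h2 : ∑ i ∈ S.filter (fun i => ¬ v i = -1), v i
      = ((S.filter fun i => ¬ v i = -1).card : ℤ) := by
    have hall : ∀ i ∈ S.filter (fun i => ¬ v i = -1), v i = 1 := by
      intro i hi
      rcases hv i with h | h
      · exact h
      · exact absurd h (Finset.mem_filter.mp hi).2
    rw [Finset.sum_congr rfl hall]
    simp
  have hc := Finset.card_filter_add_card_filter_not (s := S) (p := fun i => v i = -1)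
  rw [h1, h2]
  omega

lemma card_div_fiber {t : ℕ} (ht : 0 < t) {q : ℕ} (hq : q < 4) :
    (univ.filter fun i : Fin (4 * t) => (i : ℕ) / t = q).card = t := by
  have h : (univ.filter fun i : Fin (4 * t) => (i : ℕ) / t = q).card
      = (Finset.Ico (q * t) ((q + 1) * t)).card := by
    refine Finset.card_nbij (fun i => (i : ℕ)) ?_ ?_ ?_
    · intro a ha
      simp only [Finset.mem_coe, Finset.mem_filter, Finset.mem_univ, true_and] at ha
      rw [Finset.mem_coe, Finset.mem_Ico]
      exact (div_eq_iff' ht _ _).mp ha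
    · exact Fin.val_injective.injOn
    · intro b hb
      simp only [Finset.coe_Ico, Set.mem_Ico] at hb
      have hb4 : b < 4 * t := by
        calc b < (q + 1) * t := hb.2
        _ ≤ 4 * t := Nat.mul_le_mul_right t (by omega)
      refine ⟨⟨b, hb4⟩, ?_, rfl⟩
      simp only [Finset.mem_coe, Finset.mem_filter, Finset.mem_univ, true_and]
      exact (div_eq_iff' ht _ _).mpr hb
  rw [h, Nat.card_Ico, add_one_mul, Nat.add_sub_cancel_left]

lemma sum_row {t : ℕ} (ht : 0 < t) {v : Fin (4 * t) → ℤ} (hv : IsPMVector t v)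
    (r : Fin (4 * t) → ℤ) (e : ℕ → ℤ) (hr : ∀ i, r i = e ((i : ℕ) / t)) :
    ∑ i, v i * r i = ∑ q ∈ Finset.range 4, e q * ((t : ℤ) - 2 * (nc t v q : ℤ)) := by
  have hmaps : ∀ i ∈ (univ : Finset (Fin (4 * t))), (i : ℕ) / t ∈ Finset.range 4 := by
    intro i _
    rw [Finset.mem_range, Nat.div_lt_iff_lt_mul ht]
    exact i.isLt
  rw [← Finset.sum_fiberwise_of_maps_to hmaps (fun i => v i * r i)]
  apply Finset.sum_congr rfl
  intro q _hq
  have hq : q < 4 := Finset.mem_range.mp _hq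
  calc ∑ i ∈ univ.filter (fun i : Fin (4 * t) => (i : ℕ) / t = q), v i * r i
      = ∑ i ∈ univ.filter (fun i : Fin (4 * t) => (i : ℕ) / t = q), v i * e q := by
        refine Finset.sum_congr rfl fun i hi => ?_
        rw [hr i, (Finset.mem_filter.mp hi).2]
    _ = e q * ∑ i ∈ univ.filter (fun i : Fin (4 * t) => (i : ℕ) / t = q), v i := by
        rw [Finset.mul_sum]; exact Finset.sum_congr rfl fun i _ => mul_comm _ _
    _ = e q * ((t : ℤ) - 2 * (nc t v q : ℤ)) := by
        rw [pm_sum hv, card_div_fiber ht hq]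
        congr 2
        unfold nc
        rw [Finset.filter_filter]

lemma nc_big {t : ℕ} (ht : 0 < t) (v : Fin (4 * t) → ℤ) {q : ℕ} (hq : 4 ≤ q) :
    nc t v q = 0 := by
  unfold nc
  rw [Finset.card_eq_zero, Finset.filter_eq_empty_iff]
  rintro i - ⟨hdiv, -⟩
  have : (i : ℕ) / t < 4 := (Nat.div_lt_iff_lt_mul ht).mpr i.isLt
  omega

lemma nc_vals {t k : ℕ} (ht : 0 < t) {v : Fin (4 * t) → ℤ} (hv : IsKVertex t k v) :
    nc t v 0 = k ∧ nc t v 1 = t - k ∧ nc t v 2 = t - k ∧ nc t v 3 = k := by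
  obtain ⟨⟨hpm, h1, h2, h3⟩, hk0⟩ := hv
  unfold Orth at h1 h2 h3
  have e1 := sum_row ht hpm (r1 t) (fun _ => 1) (fun i => rfl)
  have e2 := sum_row ht hpm (r2 t) (fun q => if q < 2 then 1 else -1) (fun i => by
    simp only [r2]
    have : ((i : ℕ) < 2 * t) ↔ ((i : ℕ) / t < 2) := (Nat.div_lt_iff_lt_mul ht).symm
    rw [if_congr this rfl rfl])
  have e3 := sum_row ht hpm (r3 t) (fun q => if q = 0 ∨ q = 2 then 1 else -1) (fun i => by
    simp only [r3]
    have : ((i : ℕ) < t ∨ (2 * t ≤ (i : ℕ) ∧ (i : ℕ) < 3 * t))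
        ↔ ((i : ℕ) / t = 0 ∨ (i : ℕ) / t = 2) := by
      rw [div_eq_iff' ht, div_eq_iff' ht]
      omega
    rw [if_congr this rfl rfl])
  rw [h1] at e1
  rw [h2] at e2
  rw [h3] at e3
  simp only [Finset.sum_range_succ, Finset.sum_range_zero] at e1 e2 e3
  norm_num at e1 e2 e3
  have hk0' : nc t v 0 = k := by rw [nc_eq_negCount ht]; exact hk0
  omega

lemma r2_congr {t : ℕ} (ht : 0 < t) {i j : Fin (4 * t)} (h : (i : ℕ) / t = (j : ℕ) / t) :
    r2 t i = r2 t j := by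
  simp only [r2]
  have hiff : ((i : ℕ) < 2 * t) ↔ ((j : ℕ) < 2 * t) := by
    rw [← Nat.div_lt_iff_lt_mul ht, ← Nat.div_lt_iff_lt_mul ht, h]
  rw [if_congr hiff rfl rfl]

lemma r3_cond {t : ℕ} (ht : 0 < t) (i : Fin (4 * t)) :
    ((i : ℕ) < t ∨ (2 * t ≤ (i : ℕ) ∧ (i : ℕ) < 3 * t))
      ↔ ((i : ℕ) / t = 0 ∨ (i : ℕ) / t = 2) := by
  rw [div_eq_iff' ht, div_eq_iff' ht]
  omega

lemma r3_congr {t : ℕ} (ht : 0 < t) {i j : Fin (4 * t)} (h : (i : ℕ) / t = (j : ℕ) / t) :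
    r3 t i = r3 t j := by
  simp only [r3]
  have hiff := (r3_cond ht i).trans (h ▸ (r3_cond ht j).symm)
  rw [if_congr hiff rfl rfl]

lemma vertex_comp {t : ℕ} (ht : 0 < t) (σ : Equiv.Perm (Fin (4 * t)))
    (hdiv : ∀ i, ((σ i : Fin (4 * t)) : ℕ) / t = (i : ℕ) / t)
    {w : Fin (4 * t) → ℤ} (hw : IsVertex t w) : IsVertex t (fun i => w (σ i)) := by
  obtain ⟨hpm, h1, h2, h3⟩ := hw
  refine ⟨fun i => hpm (σ i), ?_, ?_, ?_⟩ <;> unfold Orth at *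
  · calc ∑ i, w (σ i) * r1 t i = ∑ i, w (σ i) * r1 t (σ i) := rfl
      _ = ∑ j, w j * r1 t j := Equiv.sum_comp σ (fun j => w j * r1 t j)
      _ = 0 := h1
  · calc ∑ i, w (σ i) * r2 t i = ∑ i, w (σ i) * r2 t (σ i) :=
          Finset.sum_congr rfl fun i _ => by rw [r2_congr ht (hdiv i)]
      _ = ∑ j, w j * r2 t j := Equiv.sum_comp σ (fun j => w j * r2 t j)
      _ = 0 := h2
  · calc ∑ i, w (σ i) * r3 t i = ∑ i, w (σ i) * r3 t (σ i) :=
          Finset.sum_congr rfl fun i _ => by rw [r3_congr ht (hdiv i)]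
      _ = ∑ j, w j * r3 t j := Equiv.sum_comp σ (fun j => w j * r3 t j)
      _ = 0 := h3

lemma fiber_card {t k : ℕ} (ht : 0 < t) {v v' : Fin (4 * t) → ℤ}
    (hv : IsKVertex t k v) (hv' : IsKVertex t k v') (y : ℕ × ℤ) :
    Fintype.card {i : Fin (4 * t) // ((i : ℕ) / t, v' i) = y}
      = Fintype.card {i : Fin (4 * t) // ((i : ℕ) / t, v i) = y} := by
  classical
  have nc_eq : ∀ q, nc t v q = nc t v' q := by
    intro q
    by_cases h : q < 4
    · obtain ⟨a1, a2, a3, a4⟩ := nc_vals ht hv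
      obtain ⟨b1, b2, b3, b4⟩ := nc_vals ht hv'
      interval_cases q <;> omega
    · rw [nc_big ht v (by omega), nc_big ht v' (by omega)]
  obtain ⟨q, s⟩ := y
  rw [Fintype.card_subtype, Fintype.card_subtype]
  simp only [Prod.mk.injEq]
  by_cases hs : s = -1
  · subst hs
    exact (nc_eq q).symm
  by_cases hs1 : s = 1
  · subst hs1
    have key : ∀ (w : Fin (4 * t) → ℤ), IsPMVector t w →
        (univ.filter fun i : Fin (4 * t) => (i : ℕ) / t = q ∧ w i = 1).card + nc t w q
          = (univ.filter fun i : Fin (4 * t) => (i : ℕ) / t = q).card := by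
      intro w hw
      have hsplit := Finset.card_filter_add_card_filter_not
        (s := univ.filter fun i : Fin (4 * t) => (i : ℕ) / t = q) (p := fun i => w i = -1)
      rw [Finset.filter_filter, Finset.filter_filter] at hsplit
      have hcongr : (univ.filter fun i : Fin (4 * t) => (i : ℕ) / t = q ∧ ¬ w i = -1)
          = (univ.filter fun i : Fin (4 * t) => (i : ℕ) / t = q ∧ w i = 1) := by
        apply Finset.filter_congr
        intro i _
        rcases hw i with h | h <;> simp [h]
      rw [hcongr] at hsplit
      unfold nc
      omega
    have k1 := key v hv.1.1
    have k2 := key v' hv'.1.1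
    have := nc_eq q
    omega
  · rw [Finset.card_eq_zero.mpr, Finset.card_eq_zero.mpr]
    · rw [Finset.filter_eq_empty_iff]
      rintro i - ⟨-, h⟩
      rcases hv.1.1 i with h' | h' <;> simp_all
    · rw [Finset.filter_eq_empty_iff]
      rintro i - ⟨-, h⟩
      rcases hv'.1.1 i with h' | h' <;> simp_all

/-- all `k`-vertices of `G_t` have the same degree, i.e. the number of
vertices of `G_t` orthogonal to a `k`-vertex does not depend on the chosen `k`-vertex. -/
theorem stmt_14 (t k : ℕ) (ht : 0 < t) (hk : k ≤ t) (v v' : Fin (4 * t) → ℤ)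
    (hv : IsKVertex t k v) (hv' : IsKVertex t k v') :
    {w : Fin (4 * t) → ℤ | IsVertex t w ∧ Orth t v w}.ncard =
      {w : Fin (4 * t) → ℤ | IsVertex t w ∧ Orth t v' w}.ncard := by
    classical
  set fv : Fin (4 * t) → ℕ × ℤ := fun i => ((i : ℕ) / t, v i) with hfv
  set fv' : Fin (4 * t) → ℕ × ℤ := fun i => ((i : ℕ) / t, v' i) with hfv'
  have hcard : ∀ y, Fintype.card {i // fv' i = y} = Fintype.card {i // fv i = y} :=
    fiber_card ht hv hv'
  let σ : Fin (4 * t) ≃ Fin (4 * t) :=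
    (Equiv.sigmaFiberEquiv fv').symm.trans
      ((Equiv.sigmaCongrRight fun y => Fintype.equivOfCardEq (hcard y)).trans
        (Equiv.sigmaFiberEquiv fv))
  have hσ : ∀ i, fv (σ i) = fv' i := fun i =>
    ((Fintype.equivOfCardEq (hcard (fv' i))) ⟨i, rfl⟩).prop
  have hdiv : ∀ i, ((σ i : Fin (4 * t)) : ℕ) / t = (i : ℕ) / t :=
    fun i => congrArg Prod.fst (hσ i)
  have hvv : ∀ i, v (σ i) = v' i := fun i => congrArg Prod.snd (hσ i)
  have hdiv' : ∀ i, ((σ.symm i : Fin (4 * t)) : ℕ) / t = (i : ℕ) / t := by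
    intro i
    have := hdiv (σ.symm i)
    rw [Equiv.apply_symm_apply] at this
    exact this.symm
  have key : {w : Fin (4 * t) → ℤ | IsVertex t w ∧ Orth t v' w}
      = (fun w : Fin (4 * t) → ℤ => w ∘ σ) '' {w | IsVertex t w ∧ Orth t v w} := by
    ext w'
    constructor
    · rintro ⟨hw', ho⟩
      refine ⟨w' ∘ σ.symm, ⟨?_, ?_⟩, ?_⟩
      · exact vertex_comp ht σ.symm hdiv' hw'
      · unfold Orth
        calc ∑ i, v i * (w' ∘ σ.symm) i
            = ∑ i, v (σ i) * (w' ∘ σ.symm) (σ i) :=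
              (Equiv.sum_comp σ (fun i => v i * (w' ∘ σ.symm) i)).symm
          _ = ∑ i, v' i * w' i := by
              refine Finset.sum_congr rfl fun i _ => ?_
              simp [hvv i]
          _ = 0 := ho
      · funext i
        simp
    · rintro ⟨w, ⟨hwv, hwo⟩, rfl⟩
      refine ⟨vertex_comp ht σ hdiv hwv, ?_⟩
      unfold Orth
      calc ∑ i, v' i * (w ∘ σ) i
          = ∑ i, v (σ i) * w (σ i) := Finset.sum_congr rfl fun i _ => by simp [hvv i]
        _ = ∑ j, v j * w j := Equiv.sum_comp σ (fun j => v j * w j)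
        _ = 0 := hwo
  rw [key, Set.ncard_image_of_injective]
  intro a b h
  funext i
  have := congrFun h (σ.symm i)
  simpa using this
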